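/- arXiv:1001.1894 — 2 statements merged into one kernel-verified Lean document; each statement's English description precedes it below -/
import Mathlib

section
/- For any α, β > 0, the total variation distance between the Poisson distribution with mean α and the Poisson distribution with mean β is at most 1 − exp(−|α − β|), and in particular at most |α − β|. -/
lemma exp_tsum_aux (x : ℝ) : ∑' n : ℕ, x ^ n / n.factorial = Real.exp x := by
  rw [Real.exp_eq_exp_ℝ, NormedSpace.exp_eq_tsum_div]

lemma tv_aux (a b : ℝ) (ha : 0 < a) (hab : a ≤ b) :
    ∑' m : ℕ, |Real.exp (-a) * a ^ m / m.factorial - Real.exp (-b) * b ^ m / m.factorial|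
      ≤ 2 * (1 - Real.exp (a - b)) := by
  have hb : 0 < b := lt_of_lt_of_le ha hab
  set x : ℕ → ℝ := fun m => Real.exp (-a) * a ^ m / m.factorial with hx
  set y : ℕ → ℝ := fun m => Real.exp (-b) * b ^ m / m.factorial with hy
  set c : ℕ → ℝ := fun m => Real.exp (-b) * a ^ m / m.factorial with hc
  have hsx : Summable x := by
    simpa [hx, mul_div_assoc] using (Real.summable_pow_div_factorial a).mul_left (Real.exp (-a))
  have hsy : Summable y := by
    simpa [hy, mul_div_assoc] using (Real.summable_pow_div_factorial b).mul_left (Real.exp (-b))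
  have hsc : Summable c := by
    simpa [hc, mul_div_assoc] using (Real.summable_pow_div_factorial a).mul_left (Real.exp (-b))
  have hcx : ∀ m, c m ≤ x m := fun m => by
    apply div_le_div_of_nonneg_right _ (by positivity)
    exact mul_le_mul_of_nonneg_right (Real.exp_le_exp.2 (by linarith)) (by positivity)
  have hcy : ∀ m, c m ≤ y m := fun m => by
    apply div_le_div_of_nonneg_right _ (by positivity)
    exact mul_le_mul_of_nonneg_left (pow_le_pow_left₀ ha.le hab m) (Real.exp_pos _).le
  have hpt : ∀ m, |x m - y m| ≤ x m + y m - 2 * c m := by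
    intro m
    have h1 := hcx m; have h2 := hcy m
    rw [abs_sub_le_iff]
    constructor <;> linarith
  have hsum : Summable (fun m => |x m - y m|) :=
    Summable.of_nonneg_of_le (fun m => abs_nonneg _) hpt ((hsx.add hsy).sub (hsc.mul_left 2))
  have h1 : ∑' m, |x m - y m| ≤ ∑' m, (x m + y m - 2 * c m) :=
    Summable.tsum_le_tsum hpt hsum ((hsx.add hsy).sub (hsc.mul_left 2))
  have hx1 : ∑' m, x m = 1 := by
    rw [hx]
    simp_rw [mul_div_assoc]
    rw [tsum_mul_left, exp_tsum_aux, ← Real.exp_add]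
    simp
  have hy1 : ∑' m, y m = 1 := by
    rw [hy]
    simp_rw [mul_div_assoc]
    rw [tsum_mul_left, exp_tsum_aux, ← Real.exp_add]
    simp
  have hc1 : ∑' m, c m = Real.exp (a - b) := by
    rw [hc]
    simp_rw [mul_div_assoc]
    rw [tsum_mul_left, exp_tsum_aux, ← Real.exp_add]
    ring_nf
  have h2 : ∑' m, (x m + y m - 2 * c m) = 2 * (1 - Real.exp (a - b)) := by
    rw [Summable.tsum_sub (hsx.add hsy) (hsc.mul_left 2), Summable.tsum_add hsx hsy, tsum_mul_left, hx1, hy1, hc1]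
    ring
  linarith [h1, h2.le]

/-- For `α, β > 0`, the total variation distance between `Po(α)` and `Po(β)`
is at most `1 - exp (-|α - β|)`, which in turn is at most `|α - β|`. -/
theorem tv_poisson_le (α β : ℝ) (hα : 0 < α) (hβ : 0 < β) :
    (1 / 2) * (∑' m : ℕ,
        |Real.exp (-α) * α ^ m / m.factorial - Real.exp (-β) * β ^ m / m.factorial|)
      ≤ 1 - Real.exp (-|α - β|) ∧
    1 - Real.exp (-|α - β|) ≤ |α - β| := by
  constructor
  · rcases le_total α β with h | h
    · have := tv_aux α β hα h
      rw [abs_of_nonpos (by linarith), neg_neg]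
      linarith
    · have := tv_aux β α hβ h
      rw [abs_of_nonneg (by linarith)]
      have hba : -(α - β) = β - α := by ring
      rw [hba]
      simp_rw [abs_sub_comm (Real.exp (-α) * α ^ _ / _)] at this ⊢
      linarith
  · have := Real.add_one_le_exp (-|α - β|)
    linarith
end

section
/- Let π' be a uniformly random permutation of {1,...,n} and let γ be defined by γ = π' if π' is even, and γ = (1 2) ∘ π' otherwise. Then γ is uniformly distributed on the alternating group A_n, and the probability that the multiset of cycle lengths ≤ K of γ differs from that of π' is at most 4K/n. -/
open MeasureTheory ProbabilityTheory Equiv Equiv.Perm Finset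
open scoped ENNReal


variable {α : Type} [Fintype α] [DecidableEq α]

/-- Splicing x out of its cycle: the cycle of σ⁻¹x in σ * swap x (σ⁻¹x) is shorter. -/
lemma cycle_shrink (σ : Perm α) (x : α) (hx : σ x ≠ x) :
    (((σ * Equiv.swap x (σ⁻¹ x)).cycleOf (σ⁻¹ x)).support).card
      ≤ (σ.cycleOf x).support.card - 1 := by
  set y := σ⁻¹ x with hy
  set τ := σ * Equiv.swap x y with hτ
  have hyx : y ≠ x := by
    intro h
    apply hx
    conv_lhs => rw [← h]
    simp [hy]
  have hσy : σ y = x := by simp [hy]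
  have hQstep : ∀ z, z ≠ x → σ.SameCycle x z → (τ z ≠ x ∧ σ.SameCycle x (τ z)) := by
    intro z hzx hsc
    have hτz : τ z = σ (Equiv.swap x y z) := rfl
    by_cases hzy : z = y
    · subst hzy
      rw [hτz, Equiv.swap_apply_right]
      exact ⟨hx, ⟨1, by simp⟩⟩
    · rw [hτz, Equiv.swap_apply_of_ne_of_ne hzx hzy]
      refine ⟨fun h => hzy ?_, hsc.apply_right⟩
      rw [hy, ← h, ← Equiv.Perm.mul_apply, inv_mul_cancel, Equiv.Perm.one_apply]
  have hQ : ∀ i : ℕ, (τ ^ i) y ≠ x ∧ σ.SameCycle x ((τ ^ i) y) := by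
    intro i
    induction i with
    | zero => exact ⟨hyx, ⟨-1, by simp [hy]⟩⟩
    | succ n ih =>
        have : (τ ^ (n+1)) y = τ ((τ ^ n) y) := by
          rw [pow_succ', Equiv.Perm.mul_apply]
        rw [this]
        exact hQstep _ ih.1 ih.2
  have hsub : (τ.cycleOf y).support ⊆ (σ.cycleOf x).support.erase x := by
    intro z hz
    rw [Equiv.Perm.mem_support_cycleOf_iff] at hz
    obtain ⟨hsc, hysupp⟩ := hz
    obtain ⟨i, _, hi⟩ := hsc.exists_pow_eq'
    rw [Finset.mem_erase, Equiv.Perm.mem_support_cycleOf_iff]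
    have := hQ i
    rw [hi] at this
    exact ⟨this.1, this.2, Equiv.Perm.mem_support.2 hx⟩
  calc (τ.cycleOf y).support.card ≤ ((σ.cycleOf x).support.erase x).card :=
        Finset.card_le_card hsub
    _ = (σ.cycleOf x).support.card - 1 := by
        rw [Finset.card_erase_of_mem]
        rw [Equiv.Perm.mem_support_cycleOf_iff]
        exact ⟨Equiv.Perm.SameCycle.refl _ _, Equiv.Perm.mem_support.2 hx⟩

variable {α : Type} [Fintype α] [DecidableEq α]

lemma subtypePerm_prop {τ : Perm α} {x : α} (h : τ x = x) :
    ∀ z, z ≠ x ↔ τ z ≠ x := by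
  intro z
  constructor
  · intro hz hc
    exact hz (τ.injective (by rw [hc, h]))
  · intro hz hc
    exact hz (by rw [hc, h])

lemma card_fixing_le (x : α) :
    ((univ : Finset (Perm α)).filter (fun σ => σ x = x)).card
      ≤ (Fintype.card α - 1).factorial := by
  classical
  have : ((univ : Finset (Perm α)).filter (fun σ => σ x = x)).card
      ≤ (univ : Finset (Perm {z // z ≠ x})).card := by
    apply Finset.card_le_card_of_injOn
      (fun τ => if h : τ x = x then τ.subtypePerm (fun z => (subtypePerm_prop h z).symm) else 1)
    · intro τ _; exact Finset.mem_univ _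
    · intro τ hτ τ' hτ' heq
      rw [Finset.mem_coe, Finset.mem_filter] at hτ hτ'
      simp only [dif_pos hτ.2, dif_pos hτ'.2] at heq
      ext z
      by_cases hz : z = x
      · rw [hz, hτ.2, hτ'.2]
      · have := congrArg (fun ρ => (ρ ⟨z, hz⟩ : {z // z ≠ x}).val) heq
        simpa [Equiv.Perm.subtypePerm_apply] using this
  refine this.trans ?_
  rw [Finset.card_univ, Fintype.card_perm]
  have : Fintype.card {z // z ≠ x} = Fintype.card α - 1 := by
    rw [Fintype.card_subtype_compl, Fintype.card_subtype_eq]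
  rw [this]

lemma subtype_cycle_card {τ : Perm α} {x : α} (h : τ x = x) (y : α) (hy : y ≠ x) :
    (((τ.subtypePerm (p := fun z => z ≠ x) (fun z => (subtypePerm_prop h z).symm)).cycleOf ⟨y, hy⟩).support).card
      ≤ ((τ.cycleOf y).support).card := by
  classical
  apply Finset.card_le_card_of_injOn (fun z => z.val)
  · intro w hw
    rw [Finset.mem_coe, Equiv.Perm.mem_support_cycleOf_iff] at hw
    obtain ⟨hsc, hsupp⟩ := hw
    rw [Finset.mem_coe, Equiv.Perm.mem_support_cycleOf_iff]
    constructor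
    · obtain ⟨i, hi⟩ := hsc
      refine ⟨i, ?_⟩
      have := congrArg Subtype.val hi
      rwa [Equiv.Perm.subtypePerm_zpow] at this
    · rw [Equiv.Perm.mem_support] at hsupp ⊢
      intro hc
      exact hsupp (Subtype.ext (by simpa [Equiv.Perm.subtypePerm_apply] using hc))
  · intro a _ b _ hab
    exact Subtype.ext hab

lemma count_short : ∀ (K : ℕ), 1 ≤ K → ∀ (α : Type) [Fintype α] [DecidableEq α] (x : α),
    ((univ : Finset (Perm α)).filter (fun σ => (σ.cycleOf x).support.card ≤ K)).card
      ≤ K * (Fintype.card α - 1).factorial := by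
  intro K hK
  induction K, hK using Nat.le_induction with
  | base =>
      intro α _ _ x
      refine le_trans (Finset.card_le_card ?_) (by simpa using card_fixing_le x)
      intro σ hσ
      simp only [Finset.mem_filter] at hσ ⊢
      refine ⟨hσ.1, ?_⟩
      by_contra hmov
      have h2 := (Equiv.Perm.isCycle_cycleOf σ hmov).two_le_card_support
      omega
  | succ K hK1 ih =>
      intro α _ _ x
      classical
      by_cases hcard : Fintype.card α < 2
      · calc _ ≤ (univ : Finset (Perm α)).card := Finset.card_le_card (Finset.filter_subset _ _)
          _ = (Fintype.card α).factorial := by rw [Finset.card_univ, Fintype.card_perm]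
          _ ≤ (K+1) * (Fintype.card α - 1).factorial := by
              interval_cases h : Fintype.card α <;> simp [Nat.factorial] <;> omega
      push_neg at hcard
      set n := Fintype.card α
      have hsplit : (univ : Finset (Perm α)).filter (fun σ => (σ.cycleOf x).support.card ≤ K + 1)
          ⊆ ((univ : Finset (Perm α)).filter (fun σ => σ x = x))
            ∪ ((univ : Finset (Perm α)).filter
                (fun σ => σ x ≠ x ∧ (σ.cycleOf x).support.card ≤ K + 1)) := by
        intro σ hσ
        rw [Finset.mem_filter] at hσ
        rw [Finset.mem_union, Finset.mem_filter, Finset.mem_filter]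
        by_cases h : σ x = x
        · exact Or.inl ⟨hσ.1, h⟩
        · exact Or.inr ⟨hσ.1, h, hσ.2⟩
      set T : Finset (α × Perm α) :=
        (univ.erase x).biUnion (fun y =>
          ((univ : Finset (Perm α)).filter
            (fun τ => τ x = x ∧ (τ.cycleOf y).support.card ≤ K)).image (fun τ => (y, τ))) with hT
      have hinj : ((univ : Finset (Perm α)).filter
            (fun σ => σ x ≠ x ∧ (σ.cycleOf x).support.card ≤ K + 1)).card ≤ T.card := by
        apply Finset.card_le_card_of_injOn (fun σ => (σ⁻¹ x, σ * Equiv.swap x (σ⁻¹ x)))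
        · intro σ hσ
          simp only [Finset.mem_coe, Finset.mem_filter] at hσ
          obtain ⟨-, hmov, hlen⟩ := hσ
          have hyx : σ⁻¹ x ≠ x := by
            intro h; apply hmov; conv_lhs => rw [← h]
            simp
          have hτx : (σ * Equiv.swap x (σ⁻¹ x)) x = x := by
            simp [Equiv.Perm.mul_apply, Equiv.swap_apply_left]
          have hshort := cycle_shrink σ x hmov
          rw [hT]
          rw [Finset.mem_coe, Finset.mem_biUnion]
          refine ⟨σ⁻¹ x, Finset.mem_erase.2 ⟨hyx, Finset.mem_univ _⟩, ?_⟩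
          rw [Finset.mem_image]
          exact ⟨_, Finset.mem_filter.2 ⟨Finset.mem_univ _, hτx, by omega⟩, rfl⟩
        · intro σ hσ σ' hσ' heq
          simp only [Prod.mk.injEq] at heq
          obtain ⟨h1, h2⟩ := heq
          rw [h1] at h2
          exact mul_right_cancel h2
      have hone : ∀ y ∈ univ.erase x,
          (((univ : Finset (Perm α)).filter
            (fun τ => τ x = x ∧ (τ.cycleOf y).support.card ≤ K)).image
              (fun τ => (y, τ))).card ≤ K * (n - 1 - 1).factorial := by
        intro y hy
        rw [Finset.mem_erase] at hy
        refine le_trans (Finset.card_image_le) ?_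
        have hstep : (((univ : Finset (Perm α)).filter
            (fun τ => τ x = x ∧ (τ.cycleOf y).support.card ≤ K))).card
            ≤ ((univ : Finset (Perm {z // z ≠ x})).filter
                (fun ρ => (ρ.cycleOf ⟨y, hy.1⟩).support.card ≤ K)).card := by
          apply Finset.card_le_card_of_injOn
            (fun τ => if h : τ x = x then τ.subtypePerm (fun z => (subtypePerm_prop h z).symm) else 1)
          · intro τ hτ
            simp only [Finset.mem_coe, Finset.mem_filter] at hτ ⊢
            obtain ⟨-, hfix, hlen⟩ := hτ
            refine ⟨Finset.mem_univ _, ?_⟩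
            rw [dif_pos hfix]
            exact le_trans (subtype_cycle_card hfix y hy.1) hlen
          · intro τ hτ τ' hτ' heq
            simp only [Finset.mem_coe, Finset.mem_filter] at hτ hτ'
            simp only [dif_pos hτ.2.1, dif_pos hτ'.2.1] at heq
            ext z
            by_cases hz : z = x
            · rw [hz, hτ.2.1, hτ'.2.1]
            · have := congrArg (fun ρ => (ρ ⟨z, hz⟩ : {z // z ≠ x}).val) heq
              simpa [Equiv.Perm.subtypePerm_apply] using this
        refine le_trans hstep ?_
        have hcard2 : Fintype.card {z // z ≠ x} = n - 1 := by
          rw [Fintype.card_subtype_compl, Fintype.card_subtype_eq]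
        have := ih {z // z ≠ x} (⟨y, hy.1⟩ : {z // z ≠ x})
        rwa [hcard2] at this
      have hTcard : T.card ≤ (n - 1) * (K * (n - 1 - 1).factorial) := by
        refine le_trans Finset.card_biUnion_le ?_
        have hs := Finset.sum_le_card_nsmul (univ.erase x) _ (K * (n - 1 - 1).factorial) hone
        rw [Finset.card_erase_of_mem (Finset.mem_univ _), Finset.card_univ] at hs
        simpa [smul_eq_mul] using hs
      have h1 : (n - 1) * (n - 1 - 1).factorial = (n-1).factorial := by
        obtain ⟨m, hm⟩ : ∃ m, n - 1 = m + 1 := ⟨n - 2, by omega⟩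
        have hm2 : n - 1 - 1 = m := by omega
        rw [hm2, hm, Nat.factorial_succ]
      calc _ ≤ _ := Finset.card_le_card hsplit
        _ ≤ _ := Finset.card_union_le _ _
        _ ≤ (n-1).factorial + (n - 1) * (K * (n - 1 - 1).factorial) :=
            Nat.add_le_add (card_fixing_le x) (le_trans hinj hTcard)
        _ ≤ (K + 1) * (n - 1).factorial := le_of_eq (by
            calc (n-1).factorial + (n - 1) * (K * (n - 1 - 1).factorial)
                = (n-1).factorial + K * ((n-1) * (n - 1 - 1).factorial) := by ring
              _ = (n-1).factorial + K * (n-1).factorial := by rw [h1]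
              _ = (K + 1) * (n - 1).factorial := by ring)

lemma mem_factors_swap (σ : Perm α) (a b : α) (c : Perm α)
    (hc : c ∈ σ.cycleFactorsFinset) (ha : a ∉ c.support) (hb : b ∉ c.support) :
    c ∈ (Equiv.swap a b * σ).cycleFactorsFinset := by
  rw [Equiv.Perm.mem_cycleFactorsFinset_iff] at hc ⊢
  refine ⟨hc.1, fun z hz => ?_⟩
  have hcz : c z = σ z := hc.2 z hz
  have hmem : c z ∈ c.support := Equiv.Perm.apply_mem_support.2 hz
  have hna : σ z ≠ a := fun h => ha (by rw [← h]; exact hcz ▸ hmem)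
  have hnb : σ z ≠ b := fun h => hb (by rw [← h]; exact hcz ▸ hmem)
  rw [Equiv.Perm.mul_apply, Equiv.swap_apply_of_ne_of_ne hna hnb, hcz]

lemma filter_factors_subset (K : ℕ) (a b : α) (σ : Perm α)
    (h1 : K < (σ.cycleOf a).support.card) (h2 : K < (σ.cycleOf b).support.card) :
    (σ.cycleFactorsFinset.filter (fun c => c.support.card ≤ K))
      ⊆ ((Equiv.swap a b * σ).cycleFactorsFinset.filter (fun c => c.support.card ≤ K)) := by
  intro c hc
  rw [Finset.mem_filter] at hc ⊢
  obtain ⟨hcf, hcK⟩ := hc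
  have ha : a ∉ c.support := by
    intro ha
    rw [← Equiv.Perm.cycle_is_cycleOf ha hcf] at h1
    omega
  have hb : b ∉ c.support := by
    intro hb
    rw [← Equiv.Perm.cycle_is_cycleOf hb hcf] at h2
    omega
  exact ⟨mem_factors_swap σ a b c hcf ha hb, hcK⟩

lemma filter_cycleType_swap_eq (K : ℕ) (a b : α) (σ : Perm α)
    (h1 : K < (σ.cycleOf a).support.card) (h2 : K < (σ.cycleOf b).support.card)
    (h3 : K < ((Equiv.swap a b * σ).cycleOf a).support.card)
    (h4 : K < ((Equiv.swap a b * σ).cycleOf b).support.card) :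
    Multiset.filter (fun m => m ≤ K) (Equiv.swap a b * σ).cycleType
      = Multiset.filter (fun m => m ≤ K) σ.cycleType := by
  have hss : σ = Equiv.swap a b * (Equiv.swap a b * σ) := by
    rw [← mul_assoc, Equiv.swap_mul_self, one_mul]
  have hback := filter_factors_subset K a b (Equiv.swap a b * σ) h3 h4
  rw [← hss] at hback
  have heq : ((Equiv.swap a b * σ).cycleFactorsFinset.filter (fun c => c.support.card ≤ K))
      = (σ.cycleFactorsFinset.filter (fun c => c.support.card ≤ K)) :=
    Finset.Subset.antisymm hback (filter_factors_subset K a b σ h1 h2)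
  rw [Equiv.Perm.cycleType_def, Equiv.Perm.cycleType_def, Multiset.filter_map,
    Multiset.filter_map]
  have : ∀ ρ : Perm α, Multiset.filter ((fun m => m ≤ K) ∘ (Finset.card ∘ Equiv.Perm.support))
      ρ.cycleFactorsFinset.1 = (ρ.cycleFactorsFinset.filter (fun c => c.support.card ≤ K)).1 := by
    intro ρ
    rw [Finset.filter_val]
    rfl
  rw [this, this, heq]

lemma prob_mem {n : ℕ} {Ω : Type} [MeasureSpace Ω] [IsProbabilityMeasure (ℙ : Measure Ω)]
    (π : Ω → Equiv.Perm (Fin n))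
    (hπ : ∀ σ : Equiv.Perm (Fin n), ℙ {ω | π ω = σ} = ((n.factorial : ℝ≥0∞))⁻¹)
    (S : Finset (Equiv.Perm (Fin n))) :
    ℙ {ω | π ω ∈ S} = S.card * ((n.factorial : ℝ≥0∞))⁻¹ := by
  have hub : ∀ S : Finset (Equiv.Perm (Fin n)),
      ℙ {ω | π ω ∈ S} ≤ S.card * ((n.factorial : ℝ≥0∞))⁻¹ := by
    intro S
    have hcover : {ω | π ω ∈ S} ⊆ ⋃ σ ∈ S, {ω | π ω = σ} := fun ω hω => Set.mem_biUnion hω rfl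
    calc ℙ {ω | π ω ∈ S} ≤ ℙ (⋃ σ ∈ S, {ω | π ω = σ}) := measure_mono hcover
      _ ≤ ∑ σ ∈ S, ℙ {ω | π ω = σ} := measure_biUnion_finset_le _ _
      _ = S.card * ((n.factorial : ℝ≥0∞))⁻¹ := by
          rw [Finset.sum_congr rfl (fun σ _ => hπ σ), Finset.sum_const, nsmul_eq_mul]
  refine le_antisymm (hub S) ?_
  have hSle : S.card ≤ n.factorial := by
    calc S.card ≤ (univ : Finset (Equiv.Perm (Fin n))).card :=
          Finset.card_le_card (Finset.subset_univ _)
      _ = n.factorial := by rw [Finset.card_univ, Fintype.card_perm, Fintype.card_fin]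
  have hcompl : ℙ {ω | π ω ∈ univ \ S} ≤ ((n.factorial - S.card : ℕ) : ℝ≥0∞)
      * ((n.factorial : ℝ≥0∞))⁻¹ := by
    have := hub (univ \ S)
    rwa [Finset.card_sdiff_of_subset (Finset.subset_univ S), Finset.card_univ, Fintype.card_perm,
      Fintype.card_fin] at this
  have hfact0 : ((n.factorial : ℝ≥0∞)) ≠ 0 := Nat.cast_ne_zero.2 (Nat.factorial_pos n).ne'
  have hfactt : ((n.factorial : ℝ≥0∞)) ≠ ⊤ := ENNReal.natCast_ne_top _
  have hc_ne : ((n.factorial - S.card : ℕ) : ℝ≥0∞) * ((n.factorial : ℝ≥0∞))⁻¹ ≠ ⊤ :=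
    ENNReal.mul_ne_top (ENNReal.natCast_ne_top _) (ENNReal.inv_ne_top.2 hfact0)
  have h1 : (1 : ℝ≥0∞) ≤ ℙ {ω | π ω ∈ S}
      + ((n.factorial - S.card : ℕ) : ℝ≥0∞) * ((n.factorial : ℝ≥0∞))⁻¹ := by
    calc (1 : ℝ≥0∞) = ℙ (Set.univ : Set Ω) := measure_univ.symm
      _ ≤ ℙ ({ω | π ω ∈ S} ∪ {ω | π ω ∈ univ \ S}) := by
          apply measure_mono
          intro ω _
          by_cases h : π ω ∈ S
          · exact Or.inl h
          · exact Or.inr (Finset.mem_sdiff.2 ⟨Finset.mem_univ _, h⟩)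
      _ ≤ ℙ {ω | π ω ∈ S} + ℙ {ω | π ω ∈ univ \ S} := measure_union_le _ _
      _ ≤ _ := add_le_add_right hcompl _
  have hsum : (S.card : ℝ≥0∞) * ((n.factorial : ℝ≥0∞))⁻¹
      + ((n.factorial - S.card : ℕ) : ℝ≥0∞) * ((n.factorial : ℝ≥0∞))⁻¹ = 1 := by
    rw [← add_mul, ← Nat.cast_add, Nat.add_sub_cancel' hSle, ENNReal.mul_inv_cancel hfact0 hfactt]
  rw [← ENNReal.add_le_add_iff_right hc_ne, hsum]
  exact h1
open MeasureTheory ProbabilityTheory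
open scoped ENNReal

/-- Let `π'` be a uniformly random permutation of `{1,…,n}` and set
`γ = π'` if `π'` is even, `γ = (1 2) ∘ π'` otherwise.  Then `γ` always lies in the
alternating group, `γ` is uniform on `A_n` (each even permutation has probability
`2/n!`), and the probability that the multiset of cycle lengths `≤ K` of `γ` differs
from that of `π'` is at most `4K/n`. -/
theorem uniform_alternating_coupling (n K : ℕ) (hn : 2 ≤ n) (hK : 1 ≤ K) (hKn : K ≤ n)
    (Ω : Type) [MeasureSpace Ω] [IsProbabilityMeasure (ℙ : Measure Ω)]
    (π : Ω → Equiv.Perm (Fin n))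
    (hπ : ∀ σ : Equiv.Perm (Fin n), ℙ {ω | π ω = σ} = ((n.factorial : ℝ≥0∞))⁻¹)
    (g : Ω → Equiv.Perm (Fin n))
    (hg : ∀ ω, g ω =
      if Equiv.Perm.sign (π ω) = 1 then π ω
      else Equiv.swap (⟨0, by omega⟩ : Fin n) (⟨1, by omega⟩ : Fin n) * π ω) :
    (∀ ω, g ω ∈ alternatingGroup (Fin n)) ∧
    (∀ σ ∈ alternatingGroup (Fin n),
      ℙ {ω | g ω = σ} = 2 * ((n.factorial : ℝ≥0∞))⁻¹) ∧
    ℙ {ω | Multiset.filter (fun m => m ≤ K) (g ω).cycleType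
          ≠ Multiset.filter (fun m => m ≤ K) (π ω).cycleType}
      ≤ ENNReal.ofReal (4 * K / n) := by
  classical
  have h0n : (0 : ℕ) < n := by omega
  have h1n : (1 : ℕ) < n := by omega
  set x0 : Fin n := ⟨0, by omega⟩ with hx0
  set x1 : Fin n := ⟨1, by omega⟩ with hx1
  have hne : x0 ≠ x1 := by
    intro h
    have := congrArg Fin.val h
    simp [hx0, hx1] at this
  set s : Equiv.Perm (Fin n) := Equiv.swap x0 x1 with hs
  have hsgns : Equiv.Perm.sign s = -1 := Equiv.Perm.sign_swap hne
  have hgω : ∀ ω, g ω = if Equiv.Perm.sign (π ω) = 1 then π ω else s * π ω := hg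
  refine ⟨?_, ?_, ?_⟩
  · -- part 1
    intro ω
    rw [Equiv.Perm.mem_alternatingGroup, hgω ω]
    split_ifs with h
    · exact h
    · rw [map_mul, hsgns]
      rcases Int.units_eq_one_or (Equiv.Perm.sign (π ω)) with h1 | h1
      · exact absurd h1 h
      · rw [h1]; decide
  · -- part 2
    intro σ hσ
    have hsgn : Equiv.Perm.sign σ = 1 := Equiv.Perm.mem_alternatingGroup.1 hσ
    have hsσ : Equiv.Perm.sign (s * σ) ≠ 1 := by
      rw [map_mul, hsgns, hsgn, mul_one]; decide
    have hset : {ω | g ω = σ} = {ω | π ω ∈ ({σ, s * σ} : Finset (Equiv.Perm (Fin n)))} := by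
      ext ω
      simp only [Set.mem_setOf_eq, Finset.mem_insert, Finset.mem_singleton]
      rw [hgω ω]
      constructor
      · intro h
        split_ifs at h with hsg
        · exact Or.inl h
        · right; rw [← h, ← mul_assoc, hs, Equiv.swap_mul_self, one_mul]
      · rintro (h | h)
        · rw [h, if_pos hsgn]
        · rw [h, if_neg hsσ, ← mul_assoc, hs, Equiv.swap_mul_self, one_mul]
    rw [hset, prob_mem π hπ]
    have hcard : ({σ, s * σ} : Finset (Equiv.Perm (Fin n))).card = 2 := by
      rw [Finset.card_insert_of_notMem, Finset.card_singleton]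
      rw [Finset.mem_singleton]
      intro h
      rw [← h] at hsσ
      exact hsσ hsgn
    rw [hcard]
    norm_num
  · -- part 3
    set Bad : Finset (Equiv.Perm (Fin n)) := Finset.univ.filter (fun σ =>
      Multiset.filter (fun m => m ≤ K)
          (if Equiv.Perm.sign σ = 1 then σ else s * σ).cycleType
        ≠ Multiset.filter (fun m => m ≤ K) σ.cycleType) with hBadDef
    have hEsub : {ω | Multiset.filter (fun m => m ≤ K) (g ω).cycleType
          ≠ Multiset.filter (fun m => m ≤ K) (π ω).cycleType} ⊆ {ω | π ω ∈ Bad} := by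
      intro ω hω
      rw [Set.mem_setOf_eq, hgω ω] at hω
      exact Finset.mem_filter.2 ⟨Finset.mem_univ _, hω⟩
    set ShortA : Finset (Equiv.Perm (Fin n)) := Finset.univ.filter (fun σ =>
      (σ.cycleOf x0).support.card ≤ K ∨ (σ.cycleOf x1).support.card ≤ K) with hShortADef
    set B2 : Finset (Equiv.Perm (Fin n)) := Finset.univ.filter (fun σ =>
      ((s * σ).cycleOf x0).support.card ≤ K ∨ ((s * σ).cycleOf x1).support.card ≤ K) with hB2Def
    have hBadsub : Bad ⊆ ShortA ∪ B2 := by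
      intro σ hσ
      rw [hBadDef, Finset.mem_filter] at hσ
      obtain ⟨-, hdiff⟩ := hσ
      rw [Finset.mem_union, hShortADef, hB2Def, Finset.mem_filter, Finset.mem_filter]
      by_contra hcon
      push_neg at hcon
      obtain ⟨hc1, hc2⟩ := hcon
      have hA := hc1 (Finset.mem_univ _)
      have hB := hc2 (Finset.mem_univ _)
      obtain ⟨hA0, hA1⟩ := hA
      obtain ⟨hB0, hB1⟩ := hB
      apply hdiff
      by_cases hsg : Equiv.Perm.sign σ = 1
      · rw [if_pos hsg]
      · rw [if_neg hsg]
        exact filter_cycleType_swap_eq K x0 x1 σ hA0 hA1 hB0 hB1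
    have hB2card : B2.card ≤ ShortA.card := by
      apply Finset.card_le_card_of_injOn (fun σ => s * σ)
      · intro σ hσ
        rw [hB2Def, Finset.mem_coe, Finset.mem_filter] at hσ
        rw [hShortADef, Finset.mem_coe, Finset.mem_filter]
        exact ⟨Finset.mem_univ _, hσ.2⟩
      · intro a _ b _ h
        exact mul_left_cancel h
    have hShortAcard : ShortA.card ≤ 2 * (K * (n - 1).factorial) := by
      set F0 : Finset (Equiv.Perm (Fin n)) := Finset.univ.filter (fun σ : Equiv.Perm (Fin n) =>
            (σ.cycleOf x0).support.card ≤ K) with hF0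
      set F1 : Finset (Equiv.Perm (Fin n)) := Finset.univ.filter (fun σ : Equiv.Perm (Fin n) =>
            (σ.cycleOf x1).support.card ≤ K) with hF1
      have hsplit : ShortA ⊆ F0 ∪ F1 := by
        rw [hShortADef, hF0, hF1, ← Finset.filter_or]
      have h0 := count_short K hK (Fin n) x0
      have h1 := count_short K hK (Fin n) x1
      rw [Fintype.card_fin] at h0 h1
      calc ShortA.card ≤ (F0 ∪ F1).card := Finset.card_le_card hsplit
        _ ≤ F0.card + F1.card := Finset.card_union_le _ _
        _ ≤ K * (n - 1).factorial + K * (n - 1).factorial := Nat.add_le_add h0 h1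
        _ = 2 * (K * (n - 1).factorial) := by ring
    have hBadcard : Bad.card ≤ 4 * K * (n - 1).factorial := by
      calc Bad.card ≤ (ShortA ∪ B2).card := Finset.card_le_card hBadsub
        _ ≤ ShortA.card + B2.card := Finset.card_union_le _ _
        _ ≤ 2 * (K * (n - 1).factorial) + 2 * (K * (n - 1).factorial) :=
            Nat.add_le_add hShortAcard (le_trans hB2card hShortAcard)
        _ = 4 * K * (n - 1).factorial := by ring
    calc ℙ {ω | Multiset.filter (fun m => m ≤ K) (g ω).cycleType
          ≠ Multiset.filter (fun m => m ≤ K) (π ω).cycleType}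
        ≤ ℙ {ω | π ω ∈ Bad} := measure_mono hEsub
      _ = Bad.card * ((n.factorial : ℝ≥0∞))⁻¹ := prob_mem π hπ Bad
      _ ≤ ((4 * K * (n - 1).factorial : ℕ) : ℝ≥0∞) * ((n.factorial : ℝ≥0∞))⁻¹ := by
          have : (Bad.card : ℝ≥0∞) ≤ ((4 * K * (n - 1).factorial : ℕ) : ℝ≥0∞) := by
            exact_mod_cast hBadcard
          exact mul_le_mul_left this _
      _ ≤ ENNReal.ofReal (4 * K / n) := by
          have hne0 : ((n : ℝ≥0∞)) ≠ 0 := Nat.cast_ne_zero.2 h0n.ne'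
          have hf0 : (((n-1).factorial : ℝ≥0∞)) ≠ 0 := Nat.cast_ne_zero.2 (Nat.factorial_pos _).ne'
          have hft : (((n-1).factorial : ℝ≥0∞)) ≠ ⊤ := ENNReal.natCast_ne_top _
          have hfacteq : (n.factorial : ℝ≥0∞) = (n : ℝ≥0∞) * ((n-1).factorial : ℝ≥0∞) := by
            rw [← Nat.cast_mul, Nat.mul_factorial_pred h0n.ne']
          rw [hfacteq, ENNReal.mul_inv (Or.inl hne0) (Or.inl (ENNReal.natCast_ne_top _))]
          have hlhs : ((4 * K * (n - 1).factorial : ℕ) : ℝ≥0∞)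
              * ((n : ℝ≥0∞)⁻¹ * (((n-1).factorial : ℝ≥0∞))⁻¹)
              = ((4 * K : ℕ) : ℝ≥0∞) * (n : ℝ≥0∞)⁻¹ := by
            push_cast
            rw [mul_comm ((n : ℝ≥0∞))⁻¹]
            rw [show ((4 : ℝ≥0∞) * K * ((n-1).factorial : ℕ))
                * ((((n-1).factorial : ℕ) : ℝ≥0∞)⁻¹ * ((n : ℝ≥0∞))⁻¹)
              = (4 * K) * ((((n-1).factorial : ℕ) : ℝ≥0∞) * ((((n-1).factorial : ℕ)) : ℝ≥0∞)⁻¹)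
                * ((n : ℝ≥0∞))⁻¹ by ring]
            rw [ENNReal.mul_inv_cancel hf0 hft]
            ring
          rw [hlhs]
          have hrhs : ENNReal.ofReal (4 * K / n) = ((4 * K : ℕ) : ℝ≥0∞) * ((n : ℝ≥0∞))⁻¹ := by
            rw [ENNReal.ofReal_div_of_pos (by exact_mod_cast h0n)]
            rw [show ((4 : ℝ) * K) = ((4 * K : ℕ) : ℝ) by push_cast; ring]
            rw [ENNReal.ofReal_natCast, ENNReal.ofReal_natCast, ENNReal.div_eq_inv_mul, mul_comm]
          rw [hrhs]
end
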